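/- Assume ∑_{i=1}^n α_{ik} is even for every k ∈ {1,...,q} (otherwise the Product Partition Problem is infeasible). Then there exists a subset C ⊆ {1,...,n} with ∏_{i∈C} s_i = ∏_{i∉C} s_i if and only if there exists x ∈ {0,1}^n such that x^T · Ŝ = T̂, i.e., ∑_{i=1}^n x_i · ŝ_i = T̂. -/

import Mathlib

set_option maxHeartbeats 800000

lemma digit_bound (B : ℕ) (hB : 1 ≤ B) (q : ℕ) (c : Fin q → ℕ) (hc : ∑ k, c k ≤ B) :
    ∑ k : Fin q, c k * ((k:ℕ)+1) * B ^ (k:ℕ) < (q+1) * B ^ q := by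
  rcases Nat.eq_zero_or_pos q with hq | hq
  · subst hq; simpa using Nat.one_le_iff_ne_zero.mp (Nat.one_le_pow _ _ hB)
  · have h1 : ∑ k : Fin q, c k * ((k:ℕ)+1) * B ^ (k:ℕ) ≤ ∑ k : Fin q, c k * (q * B ^ (q-1)) := by
      apply Finset.sum_le_sum
      intro k _
      rw [mul_assoc]
      apply Nat.mul_le_mul_left
      apply Nat.mul_le_mul
      · omega
      · exact Nat.pow_le_pow_right hB (by omega)
    have h2 : ∑ k : Fin q, c k * (q * B ^ (q-1)) = (∑ k, c k) * (q * B ^ (q-1)) :=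
      (Finset.sum_mul ..).symm
    have h3 : (∑ k : Fin q, c k) * (q * B ^ (q-1)) ≤ B * (q * B ^ (q-1)) :=
      Nat.mul_le_mul_right _ hc
    have h4 : B * (q * B ^ (q-1)) = q * B ^ q := by
      have : B ^ (q-1) * B = B ^ q := by
        rw [← pow_succ]; congr 1; omega
      calc B * (q * B ^ (q-1)) = q * (B ^ (q-1) * B) := by ring
        _ = q * B ^ q := by rw [this]
    have h5 : q * B ^ q < (q+1) * B ^ q := by
      have : 0 < B ^ q := Nat.pow_pos hB
      nlinarith
    omega

lemma digit_inj (B : ℕ) (hB : 1 ≤ B) : ∀ (q : ℕ) (a b : Fin q → ℕ),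
    (∑ k, a k ≤ B) → (∑ k, b k ≤ B) →
    (∑ k : Fin q, a k * ((k:ℕ)+1) * B ^ (k:ℕ) = ∑ k : Fin q, b k * ((k:ℕ)+1) * B ^ (k:ℕ)) →
    a = b := by
  intro q
  induction q with
  | zero => intro a b _ _ _; funext k; exact absurd k.2 (by omega)
  | succ q ih =>
    intro a b ha hb h
    rw [Fin.sum_univ_castSucc (f := fun k : Fin (q+1) => a k * ((k:ℕ)+1) * B ^ (k:ℕ))] at h
    rw [Fin.sum_univ_castSucc (f := fun k : Fin (q+1) => b k * ((k:ℕ)+1) * B ^ (k:ℕ))] at h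
    simp only [Fin.coe_castSucc, Fin.val_last] at h
    have ha' : ∑ k : Fin q, a k.castSucc ≤ B := by
      rw [Fin.sum_univ_castSucc (f := a)] at ha; omega
    have hb' : ∑ k : Fin q, b k.castSucc ≤ B := by
      rw [Fin.sum_univ_castSucc (f := b)] at hb; omega
    have bda : ∑ k : Fin q, a k.castSucc * ((k:ℕ)+1) * B ^ (k:ℕ) < (q+1) * B ^ q :=
      digit_bound B hB q (fun k => a k.castSucc) ha'
    have bdb : ∑ k : Fin q, b k.castSucc * ((k:ℕ)+1) * B ^ (k:ℕ) < (q+1) * B ^ q :=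
      digit_bound B hB q (fun k => b k.castSucc) hb'
    have hlast : a (Fin.last q) = b (Fin.last q) := by
      rcases lt_trichotomy (a (Fin.last q)) (b (Fin.last q)) with hlt | heq | hgt
      · exfalso
        have : a (Fin.last q) * (q+1) * B ^ q + (q+1) * B ^ q ≤ b (Fin.last q) * (q+1) * B ^ q := by
          have : (a (Fin.last q) + 1) * ((q+1) * B ^ q) ≤ b (Fin.last q) * ((q+1) * B ^ q) :=
            Nat.mul_le_mul_right _ hlt
          nlinarith
        omega
      · exact heq
      · exfalso
        have : b (Fin.last q) * (q+1) * B ^ q + (q+1) * B ^ q ≤ a (Fin.last q) * (q+1) * B ^ q := by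
          have : (b (Fin.last q) + 1) * ((q+1) * B ^ q) ≤ a (Fin.last q) * ((q+1) * B ^ q) :=
            Nat.mul_le_mul_right _ hgt
          nlinarith
        omega
    have hlow : (fun k : Fin q => a k.castSucc) = (fun k : Fin q => b k.castSucc) := by
      apply ih _ _ ha' hb'
      rw [hlast] at h
      omega
    funext k
    induction k using Fin.lastCases with
    | last => exact hlast
    | cast k => exact congrFun hlow k

lemma prod_pow_inj {q : ℕ} (p : Fin q → ℕ) (hp : ∀ k, (p k).Prime)
    (hinj : Function.Injective p) (e f : Fin q → ℕ)
    (h : ∏ k, p k ^ e k = ∏ k, p k ^ f k) : e = f := by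
  have key : ∀ g : Fin q → ℕ, ∀ j : Fin q,
      (∏ k, p k ^ g k).factorization (p j) = g j := by
    intro g j
    rw [Nat.factorization_prod (fun k _ => pow_ne_zero _ (hp k).ne_zero)]
    rw [Finset.sum_apply']
    rw [Finset.sum_eq_single j]
    · rw [Nat.Prime.factorization_pow (hp j), Finsupp.single_eq_same]
    · intro k _ hk
      rw [Nat.Prime.factorization_pow (hp k), Finsupp.single_eq_of_ne' (fun hc => hk (hinj hc))]
    · intro hj; exact absurd (Finset.mem_univ j) hj
  funext j
  have := congrArg (fun t => t.factorization (p j)) h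
  simpa [key e j, key f j] using this



/-- Assuming each column sum `∑ i, α i k` is even, the Product Partition Problem has a
solution iff there exists a binary vector `x ∈ {0,1}^n` with `∑ i, x i · ŝ i = T̂`,
where `ŝ i = ∑_{k=1}^q α i k · k · (n·m)^(k-1)` and
`T̂ = ∑_{k=1}^q T k · k · (n·m)^(k-1)` with `T k = (1/2) · ∑ i, α i k`. -/
theorem stmt_9
    (n m q : ℕ) (hn : 1 ≤ n) (hm : 1 ≤ m)
    (s : Fin n → ℕ) (hspos : ∀ i, 0 < s i) (hsm : ∀ i, s i ≤ 2 ^ m)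
    (p : Fin q → ℕ) (hp : ∀ k, (p k).Prime) (hmono : StrictMono p)
    (hdiv : ∀ r : ℕ, r.Prime → (r ∣ ∏ i, s i ↔ ∃ k, p k = r))
    (α : Fin n → Fin q → ℕ) (hα : ∀ i, s i = ∏ k, p k ^ α i k)
    (heven : ∀ k : Fin q, Even (∑ i, α i k))
    (shat : Fin n → ℕ)
    (hshat : ∀ i, shat i = ∑ k : Fin q, α i k * ((k : ℕ) + 1) * (n * m) ^ (k : ℕ))
    (That : ℕ)
    (hThat : That = ∑ k : Fin q, ((∑ i, α i k) / 2) * ((k : ℕ) + 1) * (n * m) ^ (k : ℕ)) :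
    (∃ C : Finset (Fin n), ∏ i ∈ C, s i = ∏ i ∈ Cᶜ, s i) ↔
      ∃ x : Fin n → ℕ, (∀ i, x i = 0 ∨ x i = 1) ∧ ∑ i, x i * shat i = That := by
  set B := n * m with hBdef
  have hB : 1 ≤ B := Nat.one_le_iff_ne_zero.mpr (by positivity)
  set T : Fin q → ℕ := fun k => (∑ i, α i k) / 2 with hTdef
  have hT2 : ∀ k, T k + T k = ∑ i, α i k := by
    intro k
    obtain ⟨r, hr⟩ := heven k
    simp [hTdef, hr]
    omega
  -- each s_i has total exponent at most m
  have hαm : ∀ i, ∑ k, α i k ≤ m := by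
    intro i
    have h1 : (2:ℕ) ^ (∑ k, α i k) ≤ 2 ^ m := by
      calc (2:ℕ) ^ (∑ k, α i k) = ∏ k, 2 ^ α i k := (Finset.prod_pow_eq_pow_sum ..).symm
        _ ≤ ∏ k, p k ^ α i k := by
            apply Finset.prod_le_prod (fun k _ => Nat.zero_le _)
            intro k _
            exact Nat.pow_le_pow_left (hp k).two_le _
        _ = s i := (hα i).symm
        _ ≤ 2 ^ m := hsm i
    exact (Nat.pow_le_pow_iff_right (by norm_num)).mp h1
  have htot : ∑ k : Fin q, ∑ i, α i k ≤ B := by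
    rw [Finset.sum_comm]
    calc ∑ i, ∑ k, α i k ≤ ∑ _i : Fin n, m := Finset.sum_le_sum (fun i _ => hαm i)
      _ = n * m := by simp [mul_comm]
  -- product over a subset in terms of exponent sums
  have prodC : ∀ C : Finset (Fin n), ∏ i ∈ C, s i = ∏ k, p k ^ (∑ i ∈ C, α i k) := by
    intro C
    simp_rw [hα]
    rw [Finset.prod_comm]
    exact Finset.prod_congr rfl (fun k _ => Finset.prod_pow_eq_pow_sum ..)
  have sumhat : ∀ C : Finset (Fin n),
      ∑ i ∈ C, shat i = ∑ k : Fin q, (∑ i ∈ C, α i k) * ((k:ℕ)+1) * B ^ (k:ℕ) := by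
    intro C
    simp_rw [hshat]
    rw [Finset.sum_comm]
    refine Finset.sum_congr rfl (fun k _ => ?_)
    simp_rw [mul_assoc]
    rw [← Finset.sum_mul]
  -- key equivalence for a given subset
  have keyC : ∀ C : Finset (Fin n),
      (∏ i ∈ C, s i = ∏ i ∈ Cᶜ, s i) ↔ (∀ k, ∑ i ∈ C, α i k = T k) := by
    intro C
    constructor
    · intro h k
      rw [prodC C, prodC Cᶜ] at h
      have := congrFun (prod_pow_inj p hp hmono.injective _ _ h) k
      have hsplit : ∑ i ∈ C, α i k + ∑ i ∈ Cᶜ, α i k = ∑ i, α i k :=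
        Finset.sum_add_sum_compl C _
      have := hT2 k
      omega
    · intro h
      have hc : ∀ k, ∑ i ∈ Cᶜ, α i k = T k := by
        intro k
        have hsplit : ∑ i ∈ C, α i k + ∑ i ∈ Cᶜ, α i k = ∑ i, α i k :=
          Finset.sum_add_sum_compl C _
        have := hT2 k
        have := h k
        omega
      rw [prodC C, prodC Cᶜ]
      exact Finset.prod_congr rfl (fun k _ => by rw [h k, hc k])
  constructor
  · rintro ⟨C, hC⟩
    refine ⟨fun i => if i ∈ C then 1 else 0, fun i => by by_cases h : i ∈ C <;> simp [h], ?_⟩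
    have : ∑ i, (if i ∈ C then 1 else 0) * shat i = ∑ i ∈ C, shat i := by
      rw [← Finset.sum_filter_add_sum_filter_not Finset.univ (· ∈ C)]
      simp [Finset.filter_mem_eq_inter]
    rw [this, sumhat C, hThat]
    refine Finset.sum_congr rfl (fun k _ => ?_)
    rw [(keyC C).mp hC k]
  · rintro ⟨x, hx, hsum⟩
    set C : Finset (Fin n) := Finset.filter (fun i => x i = 1) Finset.univ with hCdef
    refine ⟨C, (keyC C).mpr ?_⟩
    have hxs : ∑ i, x i * shat i = ∑ i ∈ C, shat i := by
      rw [Finset.sum_filter]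
      refine Finset.sum_congr rfl (fun i _ => ?_)
      rcases hx i with h0 | h1
      · simp [h0]
      · simp [h1]
    have heq : ∑ k : Fin q, (∑ i ∈ C, α i k) * ((k:ℕ)+1) * B ^ (k:ℕ)
        = ∑ k : Fin q, T k * ((k:ℕ)+1) * B ^ (k:ℕ) := by
      rw [← sumhat C, ← hxs, hsum, hThat]
    have ha : ∑ k : Fin q, ∑ i ∈ C, α i k ≤ B := by
      refine le_trans (Finset.sum_le_sum fun k _ => ?_) htot
      exact Finset.sum_le_sum_of_subset (Finset.subset_univ C)
    have hb : ∑ k, T k ≤ B := by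
      refine le_trans (Finset.sum_le_sum fun k _ => ?_) htot
      exact Nat.div_le_self _ _
    have := digit_inj B hB q (fun k => ∑ i ∈ C, α i k) T ha hb heq
    intro k
    exact congrFun this k
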